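/- Let γ_n : [0,1] → ℝ^d be paths with a uniform Lipschitz constant 2L converging uniformly to γ : [0,1] → ℝ, and let φ : ℝ^d → ℝ be a continuous nonnegative function with compact support. Then ∫₀¹ φ(γ(t)) |γ′(t)| dt ≤ liminf_{n→∞} ∫₀¹ φ(γ_n(t)) |γ_n′(t)| dt. -/

import Mathlib

open MeasureTheory Filter Set intervalIntegral
open scoped NNReal Topology

variable {E : Type*} [NormedAddCommGroup E] [NormedSpace ℝ E] [FiniteDimensional ℝ E]

lemma lip_deriv_norm_le {K : ℝ≥0} {f : ℝ → E} (hf : LipschitzWith K f) (t : ℝ) :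
    ‖deriv f t‖ ≤ K :=
  norm_deriv_le_of_lipschitz (𝕜 := ℝ) hf

lemma lip_deriv_intervalIntegrable {K : ℝ≥0} {f : ℝ → E} (hf : LipschitzWith K f) (a b : ℝ) :
    IntervalIntegrable (deriv f) volume a b := by
  refine (_root_.intervalIntegrable_const (c := (K : ℝ))).mono_fun
    (stronglyMeasurable_deriv f).aestronglyMeasurable ?_
  filter_upwards with t
  simpa using lip_deriv_norm_le hf t

lemma lip_deriv_norm_intervalIntegrable {K : ℝ≥0} {f : ℝ → E} (hf : LipschitzWith K f) (a b : ℝ) :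
    IntervalIntegrable (fun t => ‖deriv f t‖) volume a b :=
  (lip_deriv_intervalIntegrable hf a b).norm

set_option linter.unusedSectionVars false

lemma lip_ftc {K : ℝ≥0} {f : ℝ → E} (hf : LipschitzWith K f) (a b : ℝ) :
    (∫ t in a..b, deriv f t) = f b - f a := by
  have hc : Continuous f := hf.continuous
  set h : ℕ → ℝ := fun m => ((m : ℝ) + 1)⁻¹ with hh
  have hpos : ∀ m, 0 < h m := fun m => by positivity
  have hne : ∀ m, h m ≠ 0 := fun m => (hpos m).ne'
  have h_tendsto : Tendsto h atTop (𝓝[≠] 0) := by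
    apply tendsto_nhdsWithin_of_tendsto_nhds_of_eventually_within
    · simpa [hh, one_div] using tendsto_one_div_add_atTop_nhds_zero_nat (𝕜 := ℝ)
    · exact Eventually.of_forall fun m => hne m
  set F : ℕ → ℝ → E := fun m t => (h m)⁻¹ • (f (t + h m) - f t) with hF
  -- DCT : ∫ F m → ∫ deriv f
  have key : Tendsto (fun m => ∫ t in a..b, F m t) atTop (𝓝 (∫ t in a..b, deriv f t)) := by
    apply intervalIntegral.tendsto_integral_filter_of_dominated_convergence
      (bound := fun _ => (K : ℝ))
    · exact Eventually.of_forall fun m =>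
        (Continuous.aestronglyMeasurable (by fun_prop))
    · refine Eventually.of_forall fun m => Eventually.of_forall fun t _ => ?_
      have hd : dist (f (t + h m)) (f t) ≤ K * dist (t + h m) t := hf.dist_le_mul _ _
      have : dist (t + h m) t = h m := by
        simp [Real.dist_eq, abs_of_pos (hpos m)]
      rw [this] at hd
      have : ‖F m t‖ = (h m)⁻¹ * ‖f (t + h m) - f t‖ := by
        rw [hF]
        simp only [norm_smul, Real.norm_eq_abs, abs_inv, abs_of_pos (hpos m)]
      rw [this]
      rw [dist_eq_norm] at hd
      calc (h m)⁻¹ * ‖f (t + h m) - f t‖ ≤ (h m)⁻¹ * (K * h m) := by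
            exact mul_le_mul_of_nonneg_left hd (le_of_lt (inv_pos.2 (hpos m)))
        _ = K := by rw [mul_comm, mul_assoc, mul_inv_cancel₀ (hne m), mul_one]
    · exact _root_.intervalIntegrable_const
    · filter_upwards [hf.ae_differentiableAt] with t ht _
      have hslope := ht.hasDerivAt.tendsto_slope_zero
      exact hslope.comp h_tendsto
  -- direct computation of ∫ F m
  set G : ℝ → E := fun x => ∫ s in (0 : ℝ)..x, f s with hG
  have hG' : ∀ x : ℝ, HasDerivAt G (f x) x := fun x =>
    intervalIntegral.integral_hasDerivAt_right (hc.intervalIntegrable _ _)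
      hc.stronglyMeasurable.stronglyMeasurableAtFilter hc.continuousAt
  have hGint : ∀ u v : ℝ, (∫ t in u..v, f t) = G v - G u := by
    intro u v
    rw [hG]
    rw [eq_sub_iff_add_eq, add_comm]
    exact intervalIntegral.integral_add_adjacent_intervals
      (hc.intervalIntegrable _ _) (hc.intervalIntegrable _ _)
  have hcomp : ∀ m, (∫ t in a..b, F m t)
      = (h m)⁻¹ • (G (b + h m) - G b) - (h m)⁻¹ • (G (a + h m) - G a) := by
    intro m
    rw [hF]
    simp only
    rw [intervalIntegral.integral_smul]
    have hsub : (∫ t in a..b, (f (t + h m) - f t))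
        = (∫ t in a..b, f (t + h m)) - ∫ t in a..b, f t :=
      intervalIntegral.integral_sub ((hc.comp (continuous_id.add continuous_const)).intervalIntegrable _ _)
        (hc.intervalIntegrable _ _)
    rw [hsub, intervalIntegral.integral_comp_add_right, hGint, hGint, ← smul_sub]
    congr 1
    abel
  -- each difference quotient of G tendsto f pt
  have hGq : ∀ x : ℝ, Tendsto (fun m => (h m)⁻¹ • (G (x + h m) - G x)) atTop (𝓝 (f x)) := by
    intro x
    exact ((hG' x).tendsto_slope_zero).comp h_tendsto
  have key2 : Tendsto (fun m => ∫ t in a..b, F m t) atTop (𝓝 (f b - f a)) := by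
    simp only [hcomp]
    exact (hGq b).sub (hGq a)
  exact tendsto_nhds_unique key key2

lemma lip_chord_le {K : ℝ≥0} {f : ℝ → E} (hf : LipschitzWith K f) {a b : ℝ} (hab : a ≤ b) :
    ‖f b - f a‖ ≤ ∫ t in a..b, ‖deriv f t‖ := by
  rw [← lip_ftc hf a b]
  exact intervalIntegral.norm_integral_le_integral_norm hab

lemma weight_integrable {K : ℝ≥0} {f : ℝ → E} (hf : LipschitzWith K f) {φ : E → ℝ}
    (hφc : Continuous φ) (a b : ℝ) :
    IntervalIntegrable (fun t => φ (f t) * ‖deriv f t‖) volume a b :=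
  IntervalIntegrable.continuousOn_mul (lip_deriv_norm_intervalIntegrable hf a b)
    ((hφc.comp hf.continuous).continuousOn)

lemma piece_bound {K : ℝ≥0} {f : ℝ → E} (hf : LipschitzWith K f) {φ : E → ℝ}
    (hφc : Continuous φ) {m a b : ℝ} (hab : a ≤ b) (hm0 : 0 ≤ m)
    (hm : ∀ t ∈ Icc a b, m ≤ φ (f t)) :
    m * ‖f b - f a‖ ≤ ∫ t in a..b, φ (f t) * ‖deriv f t‖ := by
  have hint1 : IntervalIntegrable (fun t => m * ‖deriv f t‖) volume a b :=
    (lip_deriv_norm_intervalIntegrable hf a b).const_mul m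
  have hintφ := weight_integrable hf hφc a b
  calc m * ‖f b - f a‖ ≤ m * ∫ t in a..b, ‖deriv f t‖ :=
        mul_le_mul_of_nonneg_left (lip_chord_le hf hab) hm0
    _ = ∫ t in a..b, m * ‖deriv f t‖ := by
        rw [← intervalIntegral.integral_const_mul]
    _ ≤ ∫ t in a..b, φ (f t) * ‖deriv f t‖ := by
        refine intervalIntegral.integral_mono_on hab hint1 hintφ fun t ht => ?_
        exact mul_le_mul_of_nonneg_right (hm t ht) (norm_nonneg _)

lemma chord_sum {K : ℝ≥0} {f : ℝ → E} (hf : LipschitzWith K f) {ε : ℝ} (hε : 0 < ε) :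
    ∃ N : ℕ, 1 ≤ N ∧ ∀ k : ℕ, N ≤ k →
      (∫ t in (0:ℝ)..1, ‖deriv f t‖)
        ≤ (∑ i ∈ Finset.range k, ‖f (((i : ℝ) + 1) / k) - f ((i : ℝ) / k)‖) + ε := by
  set g : ℝ → E := deriv f with hgdef
  have hgmeas : StronglyMeasurable g := stronglyMeasurable_deriv f
  have hgbd : ∀ t, ‖g t‖ ≤ K := fun t => lip_deriv_norm_le hf t
  have hgint : IntegrableOn g (Icc (0:ℝ) 1) volume := by
    refine Integrable.mono' (g := fun _ => (K:ℝ)) ?_ hgmeas.aestronglyMeasurable ?_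
    · exact integrableOn_const (by simp [Real.volume_Icc])
    · exact Eventually.of_forall hgbd
  set g1 : ℝ → E := (Icc (0:ℝ) 1).indicator g with hg1def
  have hg1int : Integrable g1 volume := hgint.integrable_indicator measurableSet_Icc
  obtain ⟨c, hc_supp, hc_close, hc_cont, hc_int⟩ :=
    hg1int.exists_hasCompactSupport_integral_sub_le (show (0:ℝ) < ε/4 by linarith)
  have hc_uc : UniformContinuous c :=
    hc_cont.uniformContinuous_of_tendsto_cocompact hc_supp.is_zero_at_infty
  obtain ⟨δ, hδpos, hδ⟩ := Metric.uniformContinuous_iff.1 hc_uc (ε/4) (by linarith)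
  obtain ⟨N, hN⟩ := exists_nat_gt (1/δ)
  refine ⟨max N 1, le_max_right _ _, fun k hk => ?_⟩
  have hk1 : 1 ≤ k := le_trans (le_max_right N 1) hk
  have hkpos : (0:ℝ) < k := by exact_mod_cast hk1
  have hkδ : 1 / (k:ℝ) < δ := by
    rw [div_lt_iff₀ hkpos]
    have hNk : (1:ℝ)/δ < k := lt_of_lt_of_le hN (by exact_mod_cast le_trans (le_max_left N 1) hk)
    rw [div_lt_iff₀ hδpos] at hNk
    linarith [hNk]
  set a : ℕ → ℝ := fun i => (i : ℝ) / k with hadef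
  have ha_le : ∀ i : ℕ, a i ≤ a (i + 1) := fun i => by
    show (i:ℝ)/k ≤ ((i+1:ℕ):ℝ)/k
    rw [div_le_div_iff_of_pos_right hkpos]
    push_cast; linarith
  have ha_diff : ∀ i : ℕ, a (i + 1) - a i = 1 / k := fun i => by
    rw [hadef]; push_cast; field_simp; ring
  -- integrability on pieces
  have hgInt : ∀ u v : ℝ, IntervalIntegrable (fun t => ‖g t‖) volume u v :=
    fun u v => lip_deriv_norm_intervalIntegrable hf u v
  have hgcInt : ∀ u v : ℝ, IntervalIntegrable (fun t => ‖g t - c t‖) volume u v :=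
    fun u v => ((lip_deriv_intervalIntegrable hf u v).sub (hc_cont.intervalIntegrable u v)).norm
  -- per piece estimate
  have piece : ∀ i : ℕ, (∫ t in a i..a (i + 1), ‖g t‖)
      ≤ ‖f (a (i + 1)) - f (a i)‖ + 2 * (∫ t in a i..a (i + 1), ‖g t - c t‖)
        + 2 * (ε/4) * (1/k) := by
    intro i
    set p := a i
    set q := a (i + 1)
    have hpq : p ≤ q := ha_le i
    have hqp : q - p = 1 / k := ha_diff i
    have hosc : ∀ t ∈ Icc p q, ‖c t - c p‖ ≤ ε / 4 := by
      intro t ht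
      have : dist t p < δ := by
        rw [Real.dist_eq, abs_of_nonneg (by linarith [ht.1])]
        calc t - p ≤ q - p := by linarith [ht.2]
          _ = 1/k := hqp
          _ < δ := hkδ
      have := hδ this
      rw [dist_eq_norm] at this
      exact this.le
    -- (2)
    have h2 : (∫ t in p..q, ‖c t‖) ≤ ‖∫ t in p..q, c t‖ + 2 * (ε/4) * (1/k) := by
      have e1 : (∫ t in p..q, ‖c t‖) ≤ (q - p) * ‖c p‖ + (ε/4) * (1/k) := by
        have : (∫ t in p..q, ‖c t‖) ≤ ∫ t in p..q, (‖c p‖ + ε/4) := by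
          refine intervalIntegral.integral_mono_on hpq (hc_cont.norm.intervalIntegrable _ _)
            _root_.intervalIntegrable_const fun t ht => ?_
          calc ‖c t‖ ≤ ‖c p‖ + ‖c t - c p‖ := by
                have := norm_sub_norm_le (c t) (c p); linarith [norm_sub_norm_le (c t) (c p)]
            _ ≤ ‖c p‖ + ε/4 := by linarith [hosc t ht]
        rw [intervalIntegral.integral_const] at this
        rw [smul_eq_mul] at this
        calc (∫ t in p..q, ‖c t‖) ≤ (q - p) * (‖c p‖ + ε/4) := this
          _ = (q - p) * ‖c p‖ + (q-p) * (ε/4) := by ring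
          _ = (q - p) * ‖c p‖ + (ε/4) * (1/k) := by rw [hqp]; ring
      have e2 : (q - p) * ‖c p‖ ≤ ‖∫ t in p..q, c t‖ + (ε/4) * (1/k) := by
        have hdiff : (∫ t in p..q, c t) - (q - p) • c p = ∫ t in p..q, (c t - c p) := by
          rw [intervalIntegral.integral_sub (hc_cont.intervalIntegrable _ _)
            _root_.intervalIntegrable_const, intervalIntegral.integral_const]
        have hb : ‖(∫ t in p..q, c t) - (q - p) • c p‖ ≤ (ε/4) * (1/k) := by
          rw [hdiff]
          calc ‖∫ t in p..q, (c t - c p)‖ ≤ ∫ t in p..q, ‖c t - c p‖ :=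
                intervalIntegral.norm_integral_le_integral_norm hpq
            _ ≤ ∫ t in p..q, (ε/4 : ℝ) := by
                refine intervalIntegral.integral_mono_on hpq
                  ((hc_cont.sub continuous_const).norm.intervalIntegrable _ _)
                  _root_.intervalIntegrable_const fun t ht => hosc t ht
            _ = (q - p) * (ε/4) := by rw [intervalIntegral.integral_const, smul_eq_mul]
            _ = (ε/4) * (1/k) := by rw [hqp]; ring
        have : ‖(q - p) • c p‖ ≤ ‖∫ t in p..q, c t‖ + ‖(∫ t in p..q, c t) - (q - p) • c p‖ := by
          have := norm_sub_le ((∫ t in p..q, c t)) ((∫ t in p..q, c t) - (q - p) • c p)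
          simpa using this
        rw [norm_smul, Real.norm_eq_abs, abs_of_nonneg (by linarith : (0:ℝ) ≤ q - p)] at this
        linarith
      linarith
    -- (1)
    have h1 : (∫ t in p..q, ‖g t‖) ≤ (∫ t in p..q, ‖c t‖) + ∫ t in p..q, ‖g t - c t‖ := by
      rw [← intervalIntegral.integral_add (hc_cont.norm.intervalIntegrable _ _) (hgcInt _ _)]
      refine intervalIntegral.integral_mono_on hpq (hgInt _ _)
        ((hc_cont.norm.intervalIntegrable _ _).add (hgcInt _ _)) fun t ht => ?_
      calc ‖g t‖ = ‖c t + (g t - c t)‖ := by congr 1; abel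
        _ ≤ ‖c t‖ + ‖g t - c t‖ := norm_add_le _ _
    -- (3)+(4)
    have h3 : ‖∫ t in p..q, c t‖ ≤ ‖f q - f p‖ + ∫ t in p..q, ‖g t - c t‖ := by
      have hsplit : (∫ t in p..q, c t) = (∫ t in p..q, g t) - ∫ t in p..q, (g t - c t) := by
        rw [intervalIntegral.integral_sub (lip_deriv_intervalIntegrable hf _ _)
          (hc_cont.intervalIntegrable _ _)]
        abel
      rw [hsplit]
      have hftc : (∫ t in p..q, g t) = f q - f p := lip_ftc hf p q
      calc ‖(∫ t in p..q, g t) - ∫ t in p..q, (g t - c t)‖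
          ≤ ‖∫ t in p..q, g t‖ + ‖∫ t in p..q, (g t - c t)‖ := norm_sub_le _ _
        _ ≤ ‖f q - f p‖ + ∫ t in p..q, ‖g t - c t‖ := by
            rw [hftc]
            exact add_le_add le_rfl (intervalIntegral.norm_integral_le_integral_norm hpq)
    linarith
  -- sum up
  have hsum_g : (∑ i ∈ Finset.range k, ∫ t in a i..a (i+1), ‖g t‖)
      = ∫ t in (0:ℝ)..1, ‖g t‖ := by
    rw [intervalIntegral.sum_integral_adjacent_intervals fun i _ => hgInt _ _]
    norm_num [hadef, div_self (ne_of_gt hkpos)]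
  have hsum_gc : (∑ i ∈ Finset.range k, ∫ t in a i..a (i+1), ‖g t - c t‖)
      = ∫ t in (0:ℝ)..1, ‖g t - c t‖ := by
    rw [intervalIntegral.sum_integral_adjacent_intervals fun i _ => hgcInt _ _]
    norm_num [hadef, div_self (ne_of_gt hkpos)]
  have hgc_small : (∫ t in (0:ℝ)..1, ‖g t - c t‖) ≤ ε/4 := by
    rw [intervalIntegral.integral_of_le (by norm_num : (0:ℝ) ≤ 1)]
    have heq : (∫ t in Ioc (0:ℝ) 1, ‖g t - c t‖) = ∫ t in Ioc (0:ℝ) 1, ‖g1 t - c t‖ := by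
      refine setIntegral_congr_fun measurableSet_Ioc fun t ht => ?_
      rw [hg1def]
      rw [Set.indicator_of_mem (Ioc_subset_Icc_self ht)]
    rw [heq]
    calc (∫ t in Ioc (0:ℝ) 1, ‖g1 t - c t‖) ≤ ∫ t, ‖g1 t - c t‖ :=
          setIntegral_le_integral (hg1int.sub hc_int).norm
            (Eventually.of_forall fun t => norm_nonneg _)
      _ ≤ ε/4 := hc_close
  calc (∫ t in (0:ℝ)..1, ‖deriv f t‖) = ∑ i ∈ Finset.range k, ∫ t in a i..a (i+1), ‖g t‖ :=
        hsum_g.symm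
    _ ≤ ∑ i ∈ Finset.range k, (‖f (a (i + 1)) - f (a i)‖
          + 2 * (∫ t in a i..a (i + 1), ‖g t - c t‖) + 2 * (ε/4) * (1/k)) :=
        Finset.sum_le_sum fun i _ => piece i
    _ = (∑ i ∈ Finset.range k, ‖f (a (i+1)) - f (a i)‖)
          + 2 * (∫ t in (0:ℝ)..1, ‖g t - c t‖) + k * (2 * (ε/4) * (1/k)) := by
        rw [Finset.sum_add_distrib, Finset.sum_add_distrib, ← Finset.mul_sum, hsum_gc,
          Finset.sum_const, Finset.card_range, nsmul_eq_mul]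
    _ ≤ (∑ i ∈ Finset.range k, ‖f (a (i+1)) - f (a i)‖) + 2 * (ε/4) + ε/2 := by
        have : (k:ℝ) * (2 * (ε/4) * (1/k)) = ε/2 := by field_simp; ring
        rw [this]
        have := hgc_small
        linarith
    _ = (∑ i ∈ Finset.range k, ‖f (((i : ℝ) + 1) / k) - f ((i : ℝ) / k)‖) + ε := by
        rw [hadef]
        push_cast
        ring
theorem stmt_8 (d : ℕ) (L : ℝ) (hL : 0 < L)
    (γs : ℕ → ℝ → EuclideanSpace ℝ (Fin d)) (γ : ℝ → EuclideanSpace ℝ (Fin d))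
    (hγs : ∀ n, LipschitzOnWith (Real.toNNReal (2 * L)) (γs n) (Set.Icc 0 1))
    (hγ : LipschitzOnWith (Real.toNNReal (2 * L)) γ (Set.Icc 0 1))
    (hconv : TendstoUniformlyOn γs γ atTop (Set.Icc 0 1))
    (φ : EuclideanSpace ℝ (Fin d) → ℝ)
    (hφc : Continuous φ) (hφ0 : ∀ x, 0 ≤ φ x) (hφs : HasCompactSupport φ) :
    (∫ t in (0:ℝ)..1, φ (γ t) * ‖deriv γ t‖) ≤
      Filter.liminf (fun n => ∫ t in (0:ℝ)..1, φ (γs n t) * ‖deriv (γs n) t‖) atTop := by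
  classical
  have h2L : (0:ℝ) ≤ 2 * L := by linarith
  set K : ℝ≥0 := Real.toNNReal (2 * L) with hKdef
  have hKval : (K : ℝ) = 2 * L := Real.coe_toNNReal _ h2L
  -- the clamp function
  set cl : ℝ → ℝ := fun t => max 0 (min 1 t) with hcldef
  have hcl_lip : LipschitzWith 1 cl := (LipschitzWith.id.const_min 1).const_max 0
  have hcl_mem : ∀ t, cl t ∈ Icc (0:ℝ) 1 :=
    fun t => ⟨le_max_left _ _, max_le zero_le_one (min_le_left _ _)⟩
  have hcl_eq : ∀ t ∈ Icc (0:ℝ) 1, cl t = t := by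
    intro t ht
    rw [hcldef]
    simp only
    rw [min_eq_right ht.2, max_eq_right ht.1]
  -- clamped curves
  set ηs : ℕ → ℝ → EuclideanSpace ℝ (Fin d) := fun n t => γs n (cl t) with hηsdef
  set η : ℝ → EuclideanSpace ℝ (Fin d) := fun t => γ (cl t) with hηdef
  have hlip : ∀ (γ' : ℝ → EuclideanSpace ℝ (Fin d)), LipschitzOnWith K γ' (Icc 0 1) →
      LipschitzWith K (fun t => γ' (cl t)) := by
    intro γ' hγ' x y
    refine le_trans (hγ' (hcl_mem x) (hcl_mem y)) ?_
    refine mul_le_mul_right ?_ _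
    simpa using hcl_lip x y
  have hη_lip : LipschitzWith K η := hlip γ hγ
  have hηs_lip : ∀ n, LipschitzWith K (ηs n) := fun n => hlip (γs n) (hγs n)
  -- integrals agree for clamped curves
  have hIcongr : ∀ γ' : ℝ → EuclideanSpace ℝ (Fin d), (∫ t in (0:ℝ)..1, φ (γ' t) * ‖deriv γ' t‖)
      = ∫ t in (0:ℝ)..1, φ (γ' (cl t)) * ‖deriv (fun s => γ' (cl s)) t‖ := by
    intro γ'
    refine intervalIntegral.integral_congr_ae ?_
    have h1 : ∀ᵐ t : ℝ ∂(volume), t ∈ ({(1:ℝ)} : Set ℝ)ᶜ :=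
      compl_mem_ae_iff.mpr (measure_singleton 1)
    filter_upwards [h1] with t ht htI
    rw [uIoc_of_le (by norm_num : (0:ℝ) ≤ 1)] at htI
    have htne : t ≠ 1 := by simpa using ht
    have htIoo : t ∈ Ioo (0:ℝ) 1 := ⟨htI.1, lt_of_le_of_ne htI.2 htne⟩
    have hderiv : deriv γ' t = deriv (fun s => γ' (cl s)) t := by
      refine Filter.EventuallyEq.deriv_eq ?_
      filter_upwards [isOpen_Ioo.mem_nhds htIoo] with s hs
      rw [hcl_eq s (Ioo_subset_Icc_self hs)]
    rw [hcl_eq t (Ioo_subset_Icc_self htIoo), hderiv]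
  -- bound for φ
  obtain ⟨x₀, hx₀⟩ := hφc.exists_forall_ge_of_hasCompactSupport hφs
  set M : ℝ := φ x₀ with hMdef
  have hM0 : 0 ≤ M := hφ0 x₀
  -- uniform continuity of φ
  have hφuc : UniformContinuous φ :=
    hφc.uniformContinuous_of_tendsto_cocompact hφs.is_zero_at_infty
  -- uniform upper bound on integrals
  have hIub : ∀ (f : ℝ → EuclideanSpace ℝ (Fin d)), LipschitzWith K f →
      (∫ t in (0:ℝ)..1, φ (f t) * ‖deriv f t‖) ≤ M * (2 * L) := by
    intro f hf
    calc (∫ t in (0:ℝ)..1, φ (f t) * ‖deriv f t‖)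
        ≤ ∫ t in (0:ℝ)..1, M * (2*L) := by
          refine intervalIntegral.integral_mono_on (by norm_num)
            (weight_integrable hf hφc 0 1) _root_.intervalIntegrable_const fun t _ => ?_
          refine mul_le_mul (hx₀ _) ?_ (norm_nonneg _) hM0
          rw [← hKval]; exact lip_deriv_norm_le hf t
      _ = M * (2*L) := by rw [intervalIntegral.integral_const]; simp
  have hInonneg : ∀ n, 0 ≤ ∫ t in (0:ℝ)..1, φ (γs n t) * ‖deriv (γs n) t‖ := by
    intro n
    refine intervalIntegral.integral_nonneg (by norm_num) fun t _ => ?_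
    exact mul_nonneg (hφ0 _) (norm_nonneg _)
  -- main epsilon estimate
  have main : ∀ ε : ℝ, 0 < ε → (∫ t in (0:ℝ)..1, φ (γ t) * ‖deriv γ t‖) ≤
      Filter.liminf (fun n => ∫ t in (0:ℝ)..1, φ (γs n t) * ‖deriv (γs n) t‖) atTop
        + (M + 4*L) * ε := by
    intro ε hε
    obtain ⟨δ, hδpos, hδ⟩ := Metric.uniformContinuous_iff.1 hφuc ε hε
    obtain ⟨N₁, hN₁1, hN₁⟩ := chord_sum hη_lip hε
    obtain ⟨N₂, hN₂⟩ := exists_nat_gt ((2*L)/δ)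
    set k : ℕ := max N₁ (N₂ + 1) with hkdef
    have hk1 : 1 ≤ k := le_trans hN₁1 (le_max_left _ _)
    have hkpos : (0:ℝ) < k := by exact_mod_cast hk1
    have hkδ : (2*L)/(k:ℝ) < δ := by
      have hkgt : (2*L)/δ < (k:ℝ) := by
        refine lt_of_lt_of_le hN₂ ?_
        exact_mod_cast le_trans (Nat.le_succ N₂) (le_max_right _ _)
      rw [div_lt_iff₀ hδpos] at hkgt
      rw [div_lt_iff₀ hkpos]
      linarith
    set p : ℕ → ℝ := fun i => (i:ℝ)/k with hpdef
    have hp_le : ∀ i : ℕ, p i ≤ p (i+1) := by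
      intro i
      show (i:ℝ)/k ≤ ((i+1:ℕ):ℝ)/k
      rw [div_le_div_iff_of_pos_right hkpos]
      push_cast; linarith
    have hp_diff : ∀ i : ℕ, p (i+1) - p i = 1/k := by
      intro i; rw [hpdef]; push_cast; field_simp; ring
    have hp0 : p 0 = 0 := by rw [hpdef]; simp
    have hpk : p k = 1 := by rw [hpdef]; field_simp
    -- small oscillation along any K-Lipschitz curve
    have hosc : ∀ (f : ℝ → EuclideanSpace ℝ (Fin d)), LipschitzWith K f → ∀ i : ℕ, ∀ t ∈ Icc (p i) (p (i+1)),
        |φ (f t) - φ (f (p i))| < ε := by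
      intro f hf i t ht
      have hdist : dist (f t) (f (p i)) < δ := by
        refine lt_of_le_of_lt (hf.dist_le_mul t (p i)) ?_
        rw [hKval, Real.dist_eq, abs_of_nonneg (by linarith [ht.1])]
        calc (2*L) * (t - p i) ≤ (2*L) * (1/k) := by
              refine mul_le_mul_of_nonneg_left ?_ h2L
              have := ht.2; have := hp_diff i; linarith
          _ = (2*L)/k := by ring
          _ < δ := hkδ
      have := hδ hdist
      rwa [Real.dist_eq] at this
    -- weights
    set w : (ℝ → EuclideanSpace ℝ (Fin d)) → ℕ → ℝ := fun f i => max (φ (f (p i)) - ε) 0 with hwdef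
    have hw_nonneg : ∀ f i, 0 ≤ w f i := fun f i => le_max_right _ _
    have hw_le_M : ∀ f i, w f i ≤ M := fun f i =>
      max_le (by linarith [hx₀ (f (p i))]) hM0
    have hw_low : ∀ (f : ℝ → EuclideanSpace ℝ (Fin d)), LipschitzWith K f → ∀ i : ℕ, ∀ t ∈ Icc (p i) (p (i+1)),
        w f i ≤ φ (f t) := by
      intro f hf i t ht
      refine max_le ?_ (hφ0 _)
      have := hosc f hf i t ht
      have := abs_lt.1 this
      linarith [this.1]
    -- T sums
    set T : (ℝ → EuclideanSpace ℝ (Fin d)) → ℝ := fun f => ∑ i ∈ Finset.range k, w f i * ‖f (p (i+1)) - f (p i)‖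
      with hTdef
    have hT_le : ∀ (f : ℝ → EuclideanSpace ℝ (Fin d)), LipschitzWith K f →
        T f ≤ ∫ t in (0:ℝ)..1, φ (f t) * ‖deriv f t‖ := by
      intro f hf
      have hpieces : (∑ i ∈ Finset.range k, ∫ t in p i..p (i+1), φ (f t) * ‖deriv f t‖)
          = ∫ t in (0:ℝ)..1, φ (f t) * ‖deriv f t‖ := by
        rw [intervalIntegral.sum_integral_adjacent_intervals
          fun i _ => weight_integrable hf hφc _ _]
        rw [hp0, hpk]
      rw [hTdef, ← hpieces]
      refine Finset.sum_le_sum fun i _ => ?_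
      exact piece_bound hf hφc (hp_le i) (hw_nonneg f i) (hw_low f hf i)
    -- T of ηs n bounded by the integrals
    have hTn : ∀ n, T (ηs n) ≤ ∫ t in (0:ℝ)..1, φ (γs n t) * ‖deriv (γs n) t‖ := by
      intro n
      rw [hIcongr (γs n)]
      exact hT_le (ηs n) (hηs_lip n)
    -- convergence of T (ηs n) to T η
    have hpt : ∀ x : ℝ, Tendsto (fun n => ηs n x) atTop (𝓝 (η x)) := by
      intro x
      exact hconv.tendsto_at (hcl_mem x)
    have hTconv : Tendsto (fun n => T (ηs n)) atTop (𝓝 (T η)) := by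
      rw [hTdef]
      simp only
      refine tendsto_finset_sum _ fun i _ => ?_
      refine Tendsto.mul ?_ ?_
      · refine Tendsto.max ?_ tendsto_const_nhds
        exact Tendsto.sub_const ((hφc.continuousAt).tendsto.comp (hpt (p i))) ε
      · exact Tendsto.norm ((hpt (p (i+1))).sub (hpt (p i)))
    -- T η ≤ liminf
    have hTliminf : T η ≤ Filter.liminf
        (fun n => ∫ t in (0:ℝ)..1, φ (γs n t) * ‖deriv (γs n) t‖) atTop := by
      have h1 : T η = Filter.liminf (fun n => T (ηs n)) atTop := (hTconv.liminf_eq).symm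
      rw [h1]
      refine Filter.liminf_le_liminf (Eventually.of_forall hTn) ?_ ?_
      · exact Filter.isBoundedUnder_of ⟨0, fun n =>
          Finset.sum_nonneg fun i _ => mul_nonneg (hw_nonneg _ i) (norm_nonneg _)⟩
      · exact Filter.isCoboundedUnder_ge_of_le (x := M * (2*L)) atTop fun n =>
          le_trans (le_of_eq (hIcongr (γs n))) (hIub _ (hηs_lip n))
    -- upper estimate of the limit integral by T η
    have hup : ∀ i : ℕ, ∀ t ∈ Icc (p i) (p (i+1)), φ (η t) ≤ w η i + 2*ε := by
      intro i t ht
      have h := (abs_lt.1 (hosc η hη_lip i t ht)).2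
      have : φ (η (p i)) - ε ≤ w η i := le_max_left _ _
      linarith
    have hnormint : ∀ u v : ℝ, IntervalIntegrable (fun t => ‖deriv η t‖) volume u v :=
      fun u v => lip_deriv_norm_intervalIntegrable hη_lip u v
    have hchordsum : (∫ t in (0:ℝ)..1, ‖deriv η t‖)
        ≤ (∑ i ∈ Finset.range k, ‖η (p (i+1)) - η (p i)‖) + ε := by
      have h := hN₁ k (le_max_left _ _)
      have heq : (∑ i ∈ Finset.range k, ‖η (((i:ℝ) + 1) / k) - η ((i:ℝ) / k)‖)
          = ∑ i ∈ Finset.range k, ‖η (p (i+1)) - η (p i)‖ := by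
        refine Finset.sum_congr rfl fun i _ => ?_
        have hq : p (i+1) = ((i:ℝ)+1)/k := by rw [hpdef]; push_cast; ring
        rw [hq, hpdef]
      rw [heq] at h
      exact h
    have hBsum : (∫ t in (0:ℝ)..1, φ (η t) * ‖deriv η t‖)
        ≤ T η + (M + 4*L) * ε := by
      have hpieces : (∑ i ∈ Finset.range k, ∫ t in p i..p (i+1), φ (η t) * ‖deriv η t‖)
          = ∫ t in (0:ℝ)..1, φ (η t) * ‖deriv η t‖ := by
        rw [intervalIntegral.sum_integral_adjacent_intervals
          fun i _ => weight_integrable hη_lip hφc _ _, hp0, hpk]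
      have hpiecesN : (∑ i ∈ Finset.range k, ∫ t in p i..p (i+1), ‖deriv η t‖)
          = ∫ t in (0:ℝ)..1, ‖deriv η t‖ := by
        rw [intervalIntegral.sum_integral_adjacent_intervals
          fun i _ => hnormint _ _, hp0, hpk]
      have hNub : (∫ t in (0:ℝ)..1, ‖deriv η t‖) ≤ 2*L := by
        calc (∫ t in (0:ℝ)..1, ‖deriv η t‖) ≤ ∫ t in (0:ℝ)..1, (2*L : ℝ) := by
              refine intervalIntegral.integral_mono_on (by norm_num) (hnormint 0 1)
                _root_.intervalIntegrable_const fun t _ => ?_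
              rw [← hKval]; exact lip_deriv_norm_le hη_lip t
          _ = 2*L := by rw [intervalIntegral.integral_const]; simp
      have hpiece2 : ∀ i ∈ Finset.range k,
          (∫ t in p i..p (i+1), φ (η t) * ‖deriv η t‖)
            ≤ (w η i + 2*ε) * ∫ t in p i..p (i+1), ‖deriv η t‖ := by
        intro i _
        calc (∫ t in p i..p (i+1), φ (η t) * ‖deriv η t‖)
            ≤ ∫ t in p i..p (i+1), (w η i + 2*ε) * ‖deriv η t‖ := by
              refine intervalIntegral.integral_mono_on (hp_le i)
                (weight_integrable hη_lip hφc _ _) ((hnormint _ _).const_mul _)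
                fun t ht => ?_
              exact mul_le_mul_of_nonneg_right (hup i t ht) (norm_nonneg _)
          _ = (w η i + 2*ε) * ∫ t in p i..p (i+1), ‖deriv η t‖ := by
              rw [intervalIntegral.integral_const_mul]
      have hchord_each : ∀ i : ℕ, ‖η (p (i+1)) - η (p i)‖ ≤ ∫ t in p i..p (i+1), ‖deriv η t‖ :=
        fun i => lip_chord_le hη_lip (hp_le i)
      calc (∫ t in (0:ℝ)..1, φ (η t) * ‖deriv η t‖)
          = ∑ i ∈ Finset.range k, ∫ t in p i..p (i+1), φ (η t) * ‖deriv η t‖ := hpieces.symm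
        _ ≤ ∑ i ∈ Finset.range k, (w η i + 2*ε) * ∫ t in p i..p (i+1), ‖deriv η t‖ :=
            Finset.sum_le_sum hpiece2
        _ = (∑ i ∈ Finset.range k, w η i * ∫ t in p i..p (i+1), ‖deriv η t‖)
            + 2*ε * ∑ i ∈ Finset.range k, ∫ t in p i..p (i+1), ‖deriv η t‖ := by
            rw [Finset.mul_sum, ← Finset.sum_add_distrib]
            refine Finset.sum_congr rfl fun i _ => by ring
        _ ≤ (∑ i ∈ Finset.range k, (w η i * ‖η (p (i+1)) - η (p i)‖
              + M * ((∫ t in p i..p (i+1), ‖deriv η t‖) - ‖η (p (i+1)) - η (p i)‖)))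
            + 2*ε * (2*L) := by
            refine add_le_add (Finset.sum_le_sum fun i _ => ?_) ?_
            · have h1 := hchord_each i
              have h2 := hw_le_M η i
              have h3 := hw_nonneg η i
              nlinarith [norm_nonneg (η (p (i+1)) - η (p i))]
            · rw [hpiecesN]
              exact mul_le_mul_of_nonneg_left hNub (by linarith)
        _ = T η + M * ((∫ t in (0:ℝ)..1, ‖deriv η t‖)
              - ∑ i ∈ Finset.range k, ‖η (p (i+1)) - η (p i)‖) + 2*ε*(2*L) := by
            rw [Finset.sum_add_distrib, ← Finset.mul_sum, Finset.sum_sub_distrib, hpiecesN]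
        _ ≤ T η + M * ε + 2*ε*(2*L) := by
            have hXe : (∫ t in (0:ℝ)..1, ‖deriv η t‖)
                - (∑ i ∈ Finset.range k, ‖η (p (i+1)) - η (p i)‖) ≤ ε := by
              linarith [hchordsum]
            have := mul_le_mul_of_nonneg_left hXe hM0
            linarith
        _ ≤ T η + (M + 4*L) * ε := by ring_nf; linarith
    calc (∫ t in (0:ℝ)..1, φ (γ t) * ‖deriv γ t‖)
        = ∫ t in (0:ℝ)..1, φ (η t) * ‖deriv η t‖ := hIcongr γ
      _ ≤ T η + (M + 4*L) * ε := hBsum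
      _ ≤ Filter.liminf (fun n => ∫ t in (0:ℝ)..1, φ (γs n t) * ‖deriv (γs n) t‖) atTop
            + (M + 4*L) * ε := by linarith [hTliminf]
  -- conclude
  have hMLpos : (0:ℝ) < M + 4*L := by linarith
  refine le_of_forall_pos_le_add fun ε' hε' => ?_
  have := main (ε'/(M + 4*L)) (by positivity)
  calc (∫ t in (0:ℝ)..1, φ (γ t) * ‖deriv γ t‖)
      ≤ Filter.liminf (fun n => ∫ t in (0:ℝ)..1, φ (γs n t) * ‖deriv (γs n) t‖) atTop
        + (M + 4*L) * (ε'/(M + 4*L)) := this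
    _ = Filter.liminf (fun n => ∫ t in (0:ℝ)..1, φ (γs n t) * ‖deriv (γs n) t‖) atTop + ε' := by
        rw [mul_div_cancel₀ _ (ne_of_gt hMLpos)]
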